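/- arXiv:1203.0643 — 3 statements merged into one kernel-verified Lean document; each statement's English description precedes it below -/
import Mathlib

section
/- For probability measures ν ≪ μ on a measurable space and a measurable function ψ with ∫ e^ψ dμ < ∞, the Donsker–Varadhan variational formula holds: log ∫ e^ψ dμ = sup over ν ≪ μ of (∫ ψ dν − D(ν‖μ)), where D(ν‖μ) = ∫ log(dν/dμ) dν is the relative entropy; moreover the supremum is attained at the measure ν* with dν*/dμ = e^ψ / ∫ e^ψ dμ. -/
open MeasureTheory Real

/-- Donsker–Varadhan variational formula: `log ∫ e^ψ dμ` is the supremum (attained)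
of `∫ ψ dν − D(ν‖μ)` over probability measures `ν ≪ μ`, and the supremum is attained
at the measure with density `e^ψ / ∫ e^ψ dμ` w.r.t. `μ`. -/
theorem donsker_varadhan {Ω : Type*} [MeasurableSpace Ω]
    (μ : Measure Ω) [IsProbabilityMeasure μ]
    (ψ : Ω → ℝ) (hψ : Measurable ψ)
    (h1 : Integrable (fun x => Real.exp (ψ x)) μ)
    (h2 : Integrable (fun x => |ψ x| * Real.exp (ψ x)) μ) :
    IsGreatest
      {r : ℝ | ∃ ν : Measure Ω, IsProbabilityMeasure ν ∧ ν ≪ μ ∧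
        Integrable ψ ν ∧
        Integrable (fun x => Real.log ((ν.rnDeriv μ x).toReal)) ν ∧
        r = (∫ x, ψ x ∂ν) - ∫ x, Real.log ((ν.rnDeriv μ x).toReal) ∂ν}
      (Real.log (∫ x, Real.exp (ψ x) ∂μ)) ∧
    ((∫ x, ψ x ∂(μ.withDensity
        (fun x => ENNReal.ofReal (Real.exp (ψ x) / ∫ x, Real.exp (ψ x) ∂μ)))) -
      ∫ x, Real.log (((μ.withDensity
        (fun x => ENNReal.ofReal (Real.exp (ψ x) / ∫ x, Real.exp (ψ x) ∂μ))).rnDeriv μ x).toReal)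
        ∂(μ.withDensity
        (fun x => ENNReal.ofReal (Real.exp (ψ x) / ∫ x, Real.exp (ψ x) ∂μ)))
        = Real.log (∫ x, Real.exp (ψ x) ∂μ)) := by
  set Z : ℝ := ∫ x, Real.exp (ψ x) ∂μ with hZdef
  have hZpos : 0 < Z := integral_exp_pos h1
  -- The tilted measure
  have htilt : (μ.withDensity fun x => ENNReal.ofReal (Real.exp (ψ x) / Z)) = μ.tilted ψ := rfl
  have hprob : IsProbabilityMeasure (μ.tilted ψ) := isProbabilityMeasure_tilted h1
  have hactilt : μ.tilted ψ ≪ μ := tilted_absolutelyContinuous μ ψ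
  -- ψ is integrable w.r.t. the tilted measure
  have hψint : Integrable ψ (μ.tilted ψ) := by
    rw [Measure.tilted, integrable_withDensity_iff
      (by exact ((measurable_exp.comp hψ).div_const Z).ennreal_ofReal)
      (Filter.Eventually.of_forall fun x => ENNReal.ofReal_lt_top)]
    have hint : Integrable (fun x => |ψ x| * Real.exp (ψ x) / Z) μ := h2.div_const Z
    refine hint.mono ?_ (Filter.Eventually.of_forall fun x => ?_)
    · exact (hψ.mul
        (((measurable_exp.comp hψ).div_const Z).ennreal_ofReal.ennreal_toReal)).aestronglyMeasurable
    · rw [ENNReal.toReal_ofReal (by positivity)]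
      simp only [Real.norm_eq_abs, abs_mul, abs_div, abs_of_pos (exp_pos _),
        abs_abs, abs_of_pos hZpos]
      rw [mul_div_assoc]
      exact le_of_eq (by rw [← hZdef, abs_of_pos hZpos])
  -- log of the rnDeriv of the tilted measure
  have hlog : (fun x => Real.log (((μ.tilted ψ).rnDeriv μ x).toReal))
      =ᵐ[μ.tilted ψ] fun x => ψ x - Real.log Z :=
    hactilt.ae_le (log_rnDeriv_tilted_left_self h1)
  have hlogint : Integrable (fun x => Real.log (((μ.tilted ψ).rnDeriv μ x).toReal))
      (μ.tilted ψ) := (hψint.sub (integrable_const _)).congr hlog.symm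
  have hlogeq : ∫ x, Real.log (((μ.tilted ψ).rnDeriv μ x).toReal) ∂(μ.tilted ψ)
      = (∫ x, ψ x ∂(μ.tilted ψ)) - Real.log Z := by
    rw [integral_congr_ae hlog, integral_sub hψint (integrable_const _),
      integral_const, probReal_univ, one_smul]
  have hattained : (∫ x, ψ x ∂(μ.tilted ψ)) -
      ∫ x, Real.log (((μ.tilted ψ).rnDeriv μ x).toReal) ∂(μ.tilted ψ) = Real.log Z := by
    rw [hlogeq]; ring
  constructor
  · constructor
    · -- membership: attained at tilted measure
      exact ⟨μ.tilted ψ, hprob, hactilt, hψint, hlogint, hattained.symm⟩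
    · -- upper bound
      rintro r ⟨ν, hν, hac, hint1, hint2, rfl⟩
      set F : Ω → ℝ := fun x => (ν.rnDeriv μ x).toReal with hFdef
      set h : Ω → ℝ := fun x => Real.exp (ψ x) / F x with hhdef
      have hFmeas : Measurable F := (Measure.measurable_rnDeriv ν μ).ennreal_toReal
      have hFpos : ∀ᵐ x ∂ν, 0 < F x := by
        filter_upwards [Measure.rnDeriv_pos hac, hac.ae_le (Measure.rnDeriv_lt_top ν μ)]
          with x h1x h2x
        exact ENNReal.toReal_pos h1x.ne' h2x.ne
      have hhmeas : Measurable fun x => h x * F x :=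
        ((measurable_exp.comp hψ).div hFmeas).mul hFmeas
      have hbd : ∀ x, ‖h x * F x‖ ≤ ‖Real.exp (ψ x)‖ := by
        intro x
        rcases eq_or_ne (F x) 0 with hF0 | hF0
        · simp [hhdef, hF0, (exp_pos (ψ x)).le, Real.norm_eq_abs, abs_of_pos (exp_pos _)]
        · rw [hhdef]; simp only []
          rw [div_mul_cancel₀ _ hF0]
      have hhFint : Integrable (fun x => h x * F x) μ :=
        h1.mono hhmeas.aestronglyMeasurable (Filter.Eventually.of_forall hbd)
      have hhint : Integrable h ν := by
        rw [← Measure.withDensity_rnDeriv_eq ν μ hac,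
          integrable_withDensity_iff (Measure.measurable_rnDeriv ν μ)
            (Measure.rnDeriv_lt_top ν μ)]
        exact hhFint
      have hinth_le : ∫ x, h x ∂ν ≤ Z := by
        have := MeasureTheory.integral_rnDeriv_smul (f := h) hac
        simp only [smul_eq_mul] at this
        rw [← this]
        refine integral_mono_of_nonneg (Filter.Eventually.of_forall fun x => ?_)
          h1 (Filter.Eventually.of_forall fun x => ?_)
        · exact mul_nonneg ENNReal.toReal_nonneg (div_nonneg (exp_pos _).le
            ENNReal.toReal_nonneg)
        · have := hbd x
          simp only [Real.norm_eq_abs, abs_of_pos (exp_pos _)] at this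
          calc F x * h x = h x * F x := mul_comm _ _
            _ ≤ |h x * F x| := le_abs_self _
            _ ≤ Real.exp (ψ x) := this
      have han : ∀ᵐ x ∂ν, ψ x - Real.log (F x) = Real.log (h x) := by
        filter_upwards [hFpos] with x hx
        rw [hhdef]; simp only []
        rw [Real.log_div (exp_pos _).ne' hx.ne', Real.log_exp]
      have hloghint : Integrable (fun x => Real.log (h x)) ν :=
        (hint1.sub hint2).congr han
      have hbound : ∀ᵐ x ∂ν, Real.log (h x) ≤ h x / Z - 1 + Real.log Z := by
        filter_upwards [hFpos] with x hx
        have hhx : 0 < h x := div_pos (exp_pos _) hx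
        have hle := Real.log_le_sub_one_of_pos (div_pos hhx hZpos)
        rw [Real.log_div hhx.ne' hZpos.ne'] at hle
        linarith
      have hrint : Integrable (fun x => h x / Z - 1 + Real.log Z) ν :=
        ((hhint.div_const Z).sub (integrable_const 1)).add (integrable_const _)
      calc (∫ x, ψ x ∂ν) - ∫ x, Real.log (F x) ∂ν
          = ∫ x, (ψ x - Real.log (F x)) ∂ν := (integral_sub hint1 hint2).symm
        _ = ∫ x, Real.log (h x) ∂ν := integral_congr_ae han
        _ ≤ ∫ x, (h x / Z - 1 + Real.log Z) ∂ν := integral_mono_ae hloghint hrint hbound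
        _ = (∫ x, h x ∂ν) / Z - 1 + Real.log Z := by
            have hi1 : Integrable (fun x => h x / Z - 1) ν := by
              exact (hhint.div_const Z).sub (integrable_const 1)
            rw [integral_add hi1 (integrable_const _),
              integral_sub (hhint.div_const Z) (integrable_const 1),
              integral_div, integral_const, integral_const, probReal_univ,
              one_smul, one_smul]
        _ ≤ 1 - 1 + Real.log Z := by
            have : (∫ x, h x ∂ν) / Z ≤ 1 := (div_le_one hZpos).mpr hinth_le
            linarith
        _ = Real.log Z := by ring
  · rw [htilt]; exact hattained
end

section
/- (Pareto twisting on truncated support: constraint solvability) Let f(x) = (α−1)(1+x)^{−α} on [0,∞), α > 2, and c > 1/(α−2). For each M large enough there exists λ_M > 0 such that the density f_{λ_M}(x) = e^{λ_M x} f(x) 1_{[0,M]}(x) / ∫₀^M e^{λ_M u} f(u) du has mean c; moreover λ_M → 0 and the relative entropy D(f_{λ_M}‖f) = ∫ log(f_{λ_M}/f) f_{λ_M} dx → 0 as M → ∞. -/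
open MeasureTheory Real Filter

namespace ParetoTwist

/-- Smooth surrogate of the Pareto density, agreeing with it on `[0, ∞)`. -/
noncomputable def fb (α : ℝ) (x : ℝ) : ℝ := (α - 1) * (1 + max x 0) ^ (-α)

noncomputable def Zi (α lam M : ℝ) : ℝ :=
  ∫ x in Set.Icc (0:ℝ) M, Real.exp (lam * x) * fb α x

noncomputable def Ni (α lam M : ℝ) : ℝ :=
  ∫ x in Set.Icc (0:ℝ) M, x * (Real.exp (lam * x) * fb α x)

noncomputable def Gi (α c M lam : ℝ) : ℝ :=
  ∫ x in Set.Icc (0:ℝ) M, (x - c) * (Real.exp (lam * x) * fb α x)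

noncomputable def lamF (α c : ℝ) (M : ℝ) : ℝ :=
  sInf {l : ℝ | 0 ≤ l ∧ Gi α c M l = 0}

variable {α c : ℝ}

lemma fb_cont : Continuous (fb α) := by
  unfold fb
  refine continuous_const.mul (Continuous.rpow_const (by fun_prop) fun x => Or.inl ?_)
  positivity

lemma fb_pos (hα : 1 < α) (x : ℝ) : 0 < fb α x := by
  unfold fb
  have h : (0:ℝ) < 1 + max x 0 := by positivity
  exact mul_pos (by linarith) (Real.rpow_pos_of_pos h _)

lemma fb_le (hα : 1 < α) (x : ℝ) : fb α x ≤ α - 1 := by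
  unfold fb
  have h1 : (1:ℝ) ≤ 1 + max x 0 := by simp [le_max_iff]
  have := Real.rpow_le_one_of_one_le_of_nonpos h1 (by linarith : -α ≤ 0)
  nlinarith

lemma fb_eq (x : ℝ) (hx : 0 ≤ x) : fb α x = (α - 1) * (1 + x) ^ (-α) := by
  simp [fb, max_eq_left hx]


lemma contW (lam : ℝ) : Continuous fun x => Real.exp (lam * x) * fb α x :=
  (continuous_const.mul continuous_id').rexp.mul fb_cont

lemma intW (lam M : ℝ) :
    IntegrableOn (fun x => Real.exp (lam * x) * fb α x) (Set.Icc 0 M) volume :=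
  (contW lam).integrableOn_Icc

lemma intXW (lam M : ℝ) :
    IntegrableOn (fun x => x * (Real.exp (lam * x) * fb α x)) (Set.Icc 0 M) volume :=
  (continuous_id'.mul (contW lam)).integrableOn_Icc

lemma intCW (lam M b : ℝ) :
    IntegrableOn (fun x => (x - b) * (Real.exp (lam * x) * fb α x)) (Set.Icc 0 M) volume :=
  ((continuous_id'.sub continuous_const).mul (contW lam)).integrableOn_Icc

lemma Gi_eq (M lam : ℝ) : Gi α c M lam = Ni α lam M - c * Zi α lam M := by
  unfold Gi Ni Zi
  rw [← integral_const_mul, ← integral_sub (intXW lam M) ((intW lam M).const_mul c)]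
  congr 1 with x
  ring

lemma Gi_cont (M : ℝ) : Continuous fun lam => Gi α c M lam := by
  unfold Gi
  exact continuous_parametric_integral_of_continuous
    (by exact ((continuous_snd.sub continuous_const).mul
      (((continuous_fst.mul continuous_snd).rexp).mul (fb_cont.comp continuous_snd))))
    isCompact_Icc

/-- Closed form for `∫ (1+x)^p` over `Icc 0 M`. -/
lemma integral_one_add_rpow {p : ℝ} (hp : p ≠ -1) {M : ℝ} (hM : 0 ≤ M) :
    ∫ x in Set.Icc (0:ℝ) M, (1 + x) ^ p = ((1 + M) ^ (p + 1) - 1) / (p + 1) := by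
  rw [MeasureTheory.integral_Icc_eq_integral_Ioc, ← intervalIntegral.integral_of_le hM]
  have := intervalIntegral.integral_comp_add_left (a := (0:ℝ)) (b := M) (fun u => u ^ p) 1
  rw [show (fun x : ℝ => (1+x)^p) = fun x : ℝ => ((fun u : ℝ => u ^ p) (1 + x)) from rfl, this,
    add_zero, integral_rpow (Or.inr ⟨hp, by
      simp only [Set.uIcc_of_le (by linarith : (1:ℝ) ≤ 1 + M), Set.mem_Icc]; intro h; linarith [h.1]⟩)]
  rw [Real.one_rpow]


lemma contOn_mul_rpow (p M : ℝ) :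
    ContinuousOn (fun x : ℝ => (α - 1) * (1 + x) ^ p) (Set.Icc 0 M) :=
  continuousOn_const.mul <| ContinuousOn.rpow_const
    (continuousOn_const.add continuousOn_id)
    (fun x hx => Or.inl (by have := hx.1; intro h; linarith))

lemma Zi_zero (hα : 2 < α) {M : ℝ} (hM : 0 ≤ M) :
    Zi α 0 M = 1 - (1 + M) ^ (1 - α) := by
  unfold Zi
  simp only [zero_mul, Real.exp_zero, one_mul]
  rw [setIntegral_congr_fun measurableSet_Icc (fun x hx => fb_eq x hx.1),
    integral_const_mul, integral_one_add_rpow (by intro h; nlinarith [neg_eq_iff_eq_neg.mp h]) hM]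
  have h1 : (1 + M) ^ (-α + 1) = (1 + M) ^ (1 - α) := by ring_nf
  rw [h1]
  have h2 : -α + 1 ≠ 0 := by intro h; nlinarith
  field_simp
  ring

lemma Ni_zero (hα : 2 < α) {M : ℝ} (hM : 0 ≤ M) :
    Ni α 0 M = (α - 1) / (α - 2) * (1 - (1 + M) ^ (2 - α)) - (1 - (1 + M) ^ (1 - α)) := by
  unfold Ni
  simp only [zero_mul, Real.exp_zero, one_mul]
  have key : ∀ x ∈ Set.Icc (0:ℝ) M, x * fb α x
      = (α - 1) * (1 + x) ^ (1 - α) - (α - 1) * (1 + x) ^ (-α) := by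
    intro x hx
    rw [fb_eq x hx.1]
    have hb : (0:ℝ) < 1 + x := by have := hx.1; linarith
    have : (1 + x) ^ (1 - α) = (1 + x) * (1 + x) ^ (-α) := by
      rw [show (1 - α) = 1 + (-α) from by ring, Real.rpow_add hb, Real.rpow_one]
    rw [this]; ring
  rw [setIntegral_congr_fun measurableSet_Icc key,
    integral_sub ((contOn_mul_rpow (1-α) M).integrableOn_compact isCompact_Icc)
      ((contOn_mul_rpow (-α) M).integrableOn_compact isCompact_Icc),
    integral_const_mul, integral_const_mul,
    integral_one_add_rpow (by intro h; nlinarith) hM,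
    integral_one_add_rpow (by intro h; nlinarith [neg_eq_iff_eq_neg.mp h]) hM]
  have e1 : (1 - α) + 1 = 2 - α := by ring
  have e2 : (-α) + 1 = 1 - α := by ring
  rw [e1, e2]
  have h2 : 2 - α ≠ 0 := by intro h; nlinarith
  have h1 : 1 - α ≠ 0 := by intro h; nlinarith
  have h2' : α - 2 ≠ 0 := by intro h; nlinarith
  have h1' : α - 1 ≠ 0 := by intro h; nlinarith
  field_simp
  ring


lemma tendsto_one_add_rpow {p : ℝ} (hp : 0 < p) :
    Tendsto (fun M : ℝ => (1 + M) ^ (-p)) atTop (nhds 0) :=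
  ((tendsto_rpow_neg_atTop hp).comp (tendsto_atTop_add_const_left atTop 1 tendsto_id) :)

lemma Gi_zero_tendsto (hα : 2 < α) :
    Tendsto (fun M => Gi α c M 0) atTop (nhds (1 / (α - 2) - c)) := by
  have hA := tendsto_one_add_rpow (p := α - 2) (by linarith)
  have hB := tendsto_one_add_rpow (p := α - 1) (by linarith)
  have h2 : -(α - 2) = 2 - α := by ring
  have h1 : -(α - 1) = 1 - α := by ring
  rw [h2] at hA; rw [h1] at hB
  have key : Tendsto (fun M : ℝ =>
      (α - 1) / (α - 2) * (1 - (1 + M) ^ (2 - α)) - (1 - (1 + M) ^ (1 - α))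
        - c * (1 - (1 + M) ^ (1 - α))) atTop
      (nhds ((α - 1) / (α - 2) * (1 - 0) - (1 - 0) - c * (1 - 0))) := by
    exact (((tendsto_const_nhds.mul (tendsto_const_nhds.sub hA)).sub
      (tendsto_const_nhds.sub hB)).sub (tendsto_const_nhds.mul (tendsto_const_nhds.sub hB)))
  have hval : (α - 1) / (α - 2) * (1 - 0) - (1 - 0) - c * (1 - 0) = 1 / (α - 2) - c := by
    have : α - 2 ≠ 0 := by intro h; nlinarith
    field_simp
    ring
  rw [hval] at key
  apply key.congr'
  filter_upwards [eventually_ge_atTop (0:ℝ)] with M hM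
  rw [Gi_eq, Ni_zero hα hM, Zi_zero hα hM]

lemma Gi_zero_neg (hα : 2 < α) (hc : 1 / (α - 2) < c) :
    ∀ᶠ M in atTop, Gi α c M 0 < 0 :=
  (Gi_zero_tendsto hα).eventually_lt_const (by linarith)

lemma Gi_eps_pos (hα : 2 < α) (hc : 1 / (α - 2) < c) {ε : ℝ} (hε : 0 < ε) :
    ∀ᶠ M in atTop, 0 < Gi α c M ε := by
  have hc2 : (0:ℝ) < α - 2 := by linarith
  have hc0 : 0 < c := lt_trans (by positivity) hc
  set B : ℝ := c * Real.exp (ε * c) * (α - 1) * c with hB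
  -- the "tip" lower bound tends to infinity
  have hT : Tendsto (fun M : ℝ =>
      (α - 1) * Real.exp (-(2*ε)) * (Real.exp (ε * (1 + M)) / (1 + M) ^ α)) atTop atTop := by
    apply Tendsto.const_mul_atTop
      (mul_pos (by linarith : (0:ℝ) < α - 1) (Real.exp_pos _))
    exact (tendsto_exp_mul_div_rpow_atTop α ε hε).comp
      (tendsto_atTop_add_const_left atTop 1 tendsto_id)
  filter_upwards [eventually_ge_atTop (c + 2), hT.eventually_gt_atTop B] with M hM hTM
  have hMc : c ≤ M - 1 := by linarith
  have hM1 : (0:ℝ) ≤ M - 1 := by linarith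
  have hM0 : (0:ℝ) ≤ M := by linarith
  -- split the integral
  have hsplit1 : Gi α c M ε =
      (∫ x in Set.Icc (0:ℝ) c, (x - c) * (Real.exp (ε * x) * fb α x))
      + ∫ x in Set.Ioc c M, (x - c) * (Real.exp (ε * x) * fb α x) := by
    unfold Gi
    rw [← setIntegral_union ((Set.Iic_disjoint_Ioc le_rfl).mono_left Set.Icc_subset_Iic_self)
      measurableSet_Ioc (intCW ε c c)
      (((continuous_id'.sub continuous_const).mul (contW ε)).integrableOn_Ioc),
      Set.Icc_union_Ioc_eq_Icc hc0.le (by linarith)]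
  have hsplit2 : (∫ x in Set.Ioc c M, (x - c) * (Real.exp (ε * x) * fb α x)) =
      (∫ x in Set.Ioc c (M-1), (x - c) * (Real.exp (ε * x) * fb α x))
      + ∫ x in Set.Ioc (M-1) M, (x - c) * (Real.exp (ε * x) * fb α x) := by
    rw [← setIntegral_union (f := fun x => (x - c) * (Real.exp (ε * x) * fb α x))
      (Set.Ioc_disjoint_Ioc_of_le le_rfl) measurableSet_Ioc
      (((continuous_id'.sub continuous_const).mul (contW ε)).integrableOn_Ioc)
      (((continuous_id'.sub continuous_const).mul (contW ε)).integrableOn_Ioc),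
      Set.Ioc_union_Ioc_eq_Ioc hMc (by linarith)]
  -- bound on [0, c]
  have hb1 : -B ≤ ∫ x in Set.Icc (0:ℝ) c, (x - c) * (Real.exp (ε * x) * fb α x) := by
    have hpt : ∀ x ∈ Set.Icc (0:ℝ) c, -(c * Real.exp (ε * c) * (α - 1))
        ≤ (x - c) * (Real.exp (ε * x) * fb α x) := by
      intro x hx
      obtain ⟨hx0, hxc⟩ := hx
      have hw0 : 0 ≤ Real.exp (ε * x) * fb α x :=
        le_of_lt (mul_pos (Real.exp_pos _) (fb_pos (by linarith) x))
      have hwle : Real.exp (ε * x) * fb α x ≤ Real.exp (ε * c) * (α - 1) := by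
        apply mul_le_mul (Real.exp_le_exp.mpr (by nlinarith)) (fb_le (by linarith) x)
          (le_of_lt (fb_pos (by linarith) x)) (Real.exp_pos _).le
      nlinarith
    have := setIntegral_ge_of_const_le_real (μ := volume)
      measurableSet_Icc (measure_Icc_lt_top).ne hpt (intCW ε c c)
    rw [measureReal_def, Real.volume_Icc, sub_zero, ENNReal.toReal_ofReal hc0.le] at this
    calc -B = -(c * Real.exp (ε * c) * (α - 1)) * c := by rw [hB]; ring
    _ ≤ _ := this
  -- bound on (c, M-1]
  have hb2 : (0:ℝ) ≤ ∫ x in Set.Ioc c (M-1), (x - c) * (Real.exp (ε * x) * fb α x) := by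
    apply setIntegral_nonneg measurableSet_Ioc
    intro x hx
    have hw0 : 0 ≤ Real.exp (ε * x) * fb α x :=
      le_of_lt (mul_pos (Real.exp_pos _) (fb_pos (by linarith) x))
    have : 0 ≤ x - c := by linarith [hx.1]
    positivity
  -- bound on (M-1, M]
  set K : ℝ := (M - 1 - c) * (Real.exp (ε * (M-1)) * ((α - 1) * (1 + M) ^ (-α))) with hKdef
  have hb3 : K ≤ ∫ x in Set.Ioc (M-1) M, (x - c) * (Real.exp (ε * x) * fb α x) := by
    have hpt : ∀ x ∈ Set.Ioc (M-1) M, K ≤ (x - c) * (Real.exp (ε * x) * fb α x) := by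
      intro x hx
      obtain ⟨hx1, hx2⟩ := hx
      have hx0 : (0:ℝ) ≤ x := by linarith
      rw [fb_eq x hx0, hKdef]
      have h1x : (0:ℝ) < 1 + x := by linarith
      have hfbge : (α - 1) * (1 + M) ^ (-α) ≤ (α - 1) * (1 + x) ^ (-α) := by
        apply mul_le_mul_of_nonneg_left
          (Real.rpow_le_rpow_of_nonpos h1x (by linarith) (by linarith)) (by linarith)
      have hexpge : Real.exp (ε * (M-1)) ≤ Real.exp (ε * x) :=
        Real.exp_le_exp.mpr (by nlinarith)
      have hxc : M - 1 - c ≤ x - c := by linarith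
      have h3 : (0:ℝ) ≤ M - 1 - c := by linarith
      apply mul_le_mul hxc (mul_le_mul hexpge hfbge
        (le_of_lt (mul_pos (by linarith : (0:ℝ) < α - 1)
          (Real.rpow_pos_of_pos (by linarith : (0:ℝ) < 1 + M) _)))
        (Real.exp_pos _).le) (le_of_lt (mul_pos (Real.exp_pos _)
        (mul_pos (by linarith : (0:ℝ) < α - 1)
          (Real.rpow_pos_of_pos (by linarith : (0:ℝ) < 1 + M) _)))) (by linarith)
    have := setIntegral_ge_of_const_le_real (μ := volume)
      measurableSet_Ioc (measure_Ioc_lt_top).ne hpt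
      (((continuous_id'.sub continuous_const).mul (contW ε)).integrableOn_Ioc)
    rwa [measureReal_def, Real.volume_Ioc, show M - (M-1) = 1 from by ring, ENNReal.toReal_ofReal one_pos.le,
      mul_one] at this
  -- the tip beats the constant B
  have hTK : (α - 1) * Real.exp (-(2*ε)) * (Real.exp (ε * (1 + M)) / (1 + M) ^ α) ≤ K := by
    have hM0' : (0:ℝ) < 1 + M := by linarith
    have e : Real.exp (ε * (M-1)) = Real.exp (ε * (1 + M)) * Real.exp (-(2*ε)) := by
      rw [← Real.exp_add]; ring_nf
    have heq : (M - 1 - c) * ((α - 1) * Real.exp (-(2*ε))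
        * (Real.exp (ε * (1 + M)) / (1 + M) ^ α)) = K := by
      rw [hKdef, e, Real.rpow_neg hM0'.le, div_eq_mul_inv]; ring
    rw [← heq]
    have h1le : (1:ℝ) ≤ M - 1 - c := by linarith
    have hTpos : (0:ℝ) ≤ (α - 1) * Real.exp (-(2*ε)) * (Real.exp (ε * (1 + M)) / (1 + M) ^ α) :=
      le_of_lt (mul_pos (mul_pos (by linarith) (Real.exp_pos _))
        (div_pos (Real.exp_pos _) (Real.rpow_pos_of_pos hM0' α)))
    exact le_mul_of_one_le_left hTpos h1le
  rw [hsplit1, hsplit2]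
  linarith


lemma lamF_spec {M ε : ℝ} (hε : 0 < ε) (h0 : Gi α c M 0 < 0) (hpos : 0 < Gi α c M ε) :
    0 < lamF α c M ∧ lamF α c M ≤ ε ∧ Gi α c M (lamF α c M) = 0 := by
  have hcont := Gi_cont (α := α) (c := c) M
  obtain ⟨l₀, hl₀mem, hl₀⟩ := intermediate_value_Icc hε.le hcont.continuousOn
    ⟨h0.le, hpos.le⟩
  have hS : {l : ℝ | 0 ≤ l ∧ Gi α c M l = 0}.Nonempty := ⟨l₀, hl₀mem.1, hl₀⟩
  have hbdd : BddBelow {l : ℝ | 0 ≤ l ∧ Gi α c M l = 0} := ⟨0, fun l hl => hl.1⟩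
  have hclosed : IsClosed {l : ℝ | 0 ≤ l ∧ Gi α c M l = 0} := by
    have : {l : ℝ | 0 ≤ l ∧ Gi α c M l = 0}
        = {l : ℝ | 0 ≤ l} ∩ (fun l => Gi α c M l) ⁻¹' {0} := by
      ext l; simp [Set.mem_setOf_eq]
    rw [this]
    exact (isClosed_le continuous_const continuous_id).inter
      (isClosed_singleton.preimage hcont)
  have hmem : lamF α c M ∈ {l : ℝ | 0 ≤ l ∧ Gi α c M l = 0} :=
    hclosed.csInf_mem hS hbdd
  refine ⟨?_, ?_, hmem.2⟩
  · rcases lt_or_eq_of_le hmem.1 with h | h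
    · exact h
    · exfalso; rw [← h] at hmem; exact absurd hmem.2 h0.ne
  · exact le_trans (csInf_le hbdd ⟨hl₀mem.1, hl₀⟩) hl₀mem.2

lemma Zi_pos (hα : 1 < α) {lam M : ℝ} (hlam : 0 ≤ lam) (hM : 0 < M) :
    0 < Zi α lam M := by
  have hpt : ∀ x ∈ Set.Icc (0:ℝ) M, (α - 1) * (1 + M) ^ (-α)
      ≤ Real.exp (lam * x) * fb α x := by
    intro x hx
    obtain ⟨hx0, hxM⟩ := hx
    have h1 : (1:ℝ) ≤ Real.exp (lam * x) := by
      rw [← Real.exp_zero]; exact Real.exp_le_exp.mpr (by nlinarith)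
    have h2 : (α - 1) * (1 + M) ^ (-α) ≤ fb α x := by
      rw [fb_eq x hx0]
      exact mul_le_mul_of_nonneg_left
        (Real.rpow_le_rpow_of_nonpos (by linarith) (by linarith) (by linarith)) (by linarith)
    calc (α - 1) * (1 + M) ^ (-α) ≤ fb α x := h2
    _ = 1 * fb α x := (one_mul _).symm
    _ ≤ Real.exp (lam * x) * fb α x :=
      mul_le_mul_of_nonneg_right h1 (fb_pos hα x).le
  have := setIntegral_ge_of_const_le_real (μ := volume)
    measurableSet_Icc (measure_Icc_lt_top).ne hpt (intW lam M)
  rw [measureReal_def, Real.volume_Icc, sub_zero, ENNReal.toReal_ofReal hM.le] at this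
  calc (0:ℝ) < (α - 1) * (1 + M) ^ (-α) * M :=
    mul_pos (mul_pos (by linarith) (Real.rpow_pos_of_pos (by linarith) _)) hM
  _ ≤ Zi α lam M := this

lemma Zi_zero_le_one (hα : 2 < α) {M : ℝ} (hM : 0 ≤ M) : Zi α 0 M ≤ 1 := by
  rw [Zi_zero hα hM]
  have := Real.rpow_nonneg (by linarith : (0:ℝ) ≤ 1 + M) (1 - α)
  linarith

lemma Zi_mono0 {lam M : ℝ} (hα : 1 < α) (hlam : 0 ≤ lam) :
    Zi α 0 M ≤ Zi α lam M := by
  apply setIntegral_mono_on (intW 0 M) (intW lam M) measurableSet_Icc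
  intro x hx
  apply mul_le_mul_of_nonneg_right _ (fb_pos hα x).le
  exact Real.exp_le_exp.mpr (by nlinarith [hx.1])

lemma Zi_upper (hα : 2 < α) {lam M A : ℝ} (hlam : 0 < lam) (hM : 0 ≤ M) (hA : 0 < A)
    (hcon : Ni α lam M = c * Zi α lam M) :
    Zi α lam M * (1 - c / A) ≤ Real.exp (lam * A) := by
  have hpt : ∀ x ∈ Set.Icc (0:ℝ) M, Real.exp (lam * x) * fb α x
      ≤ Real.exp (lam * A) * (Real.exp (0 * x) * fb α x)
        + (1/A) * (x * (Real.exp (lam * x) * fb α x)) := by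
    intro x hx
    obtain ⟨hx0, hxM⟩ := hx
    have hfb := (fb_pos (by linarith : 1 < α) x).le
    have hw : (0:ℝ) ≤ Real.exp (lam * x) * fb α x := mul_nonneg (Real.exp_pos _).le hfb
    rcases le_or_gt x A with h | h
    · have h1 : Real.exp (lam * x) * fb α x ≤ Real.exp (lam * A) * (Real.exp (0 * x) * fb α x) := by
        rw [zero_mul, Real.exp_zero, one_mul]
        exact mul_le_mul_of_nonneg_right (Real.exp_le_exp.mpr (by nlinarith)) hfb
      nlinarith [mul_nonneg (mul_nonneg (le_of_lt (one_div_pos.mpr hA)) hx0) hw]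
    · have h1x : (1:ℝ) ≤ x / A := (one_le_div hA).mpr h.le
      have h2 : Real.exp (lam * x) * fb α x ≤ (1/A) * (x * (Real.exp (lam * x) * fb α x)) := by
        rw [show (1/A) * (x * (Real.exp (lam * x) * fb α x))
          = (x/A) * (Real.exp (lam * x) * fb α x) from by ring]
        calc Real.exp (lam * x) * fb α x = 1 * (Real.exp (lam * x) * fb α x) := (one_mul _).symm
        _ ≤ (x/A) * (Real.exp (lam * x) * fb α x) := mul_le_mul_of_nonneg_right h1x hw
      nlinarith [mul_nonneg (Real.exp_pos (lam * A)).le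
        (mul_nonneg (Real.exp_pos (0 * x)).le hfb)]
  have hintg : IntegrableOn (fun x => Real.exp (lam * A) * (Real.exp (0 * x) * fb α x)
      + (1/A) * (x * (Real.exp (lam * x) * fb α x))) (Set.Icc (0:ℝ) M) volume :=
    ((intW 0 M).const_mul _).add ((intXW lam M).const_mul _)
  have hint : Zi α lam M ≤ Real.exp (lam * A) * Zi α 0 M + (1/A) * Ni α lam M := by
    unfold Zi Ni
    calc (∫ x in Set.Icc (0:ℝ) M, Real.exp (lam * x) * fb α x)
        ≤ ∫ x in Set.Icc (0:ℝ) M, (Real.exp (lam * A) * (Real.exp (0 * x) * fb α x)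
          + (1/A) * (x * (Real.exp (lam * x) * fb α x))) :=
      setIntegral_mono_on (intW lam M) hintg measurableSet_Icc hpt
    _ = Real.exp (lam * A) * (∫ x in Set.Icc (0:ℝ) M, Real.exp (0 * x) * fb α x)
        + (1/A) * ∫ x in Set.Icc (0:ℝ) M, x * (Real.exp (lam * x) * fb α x) := by
      rw [integral_add ((intW 0 M).const_mul _) ((intXW lam M).const_mul _),
        integral_const_mul, integral_const_mul]
  rw [hcon] at hint
  have h1 : Real.exp (lam * A) * Zi α 0 M ≤ Real.exp (lam * A) :=
    mul_le_of_le_one_right (Real.exp_pos _).le (Zi_zero_le_one hα hM)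
  have : Zi α lam M ≤ Real.exp (lam * A) + (c / A) * Zi α lam M := by
    calc Zi α lam M ≤ Real.exp (lam * A) * Zi α 0 M + (1/A) * (c * Zi α lam M) := hint
    _ ≤ Real.exp (lam * A) + (c/A) * Zi α lam M := by
      rw [show (1/A) * (c * Zi α lam M) = (c/A) * Zi α lam M from by ring]
      linarith
  have expand : Zi α lam M * (1 - c/A) = Zi α lam M - (c/A) * Zi α lam M := by ring
  linarith

lemma entropy_eq {lam M : ℝ} (hZ : 0 < Zi α lam M) :
    (∫ x in Set.Icc (0:ℝ) M, Real.log (Real.exp (lam * x) / Zi α lam M)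
      * (Real.exp (lam * x) * fb α x / Zi α lam M))
    = lam * (Ni α lam M / Zi α lam M) - Real.log (Zi α lam M) := by
  have h1 : ∀ x ∈ Set.Icc (0:ℝ) M, Real.log (Real.exp (lam * x) / Zi α lam M)
      * (Real.exp (lam * x) * fb α x / Zi α lam M)
      = (lam / Zi α lam M) * (x * (Real.exp (lam * x) * fb α x))
        - (Real.log (Zi α lam M) / Zi α lam M) * (Real.exp (lam * x) * fb α x) := by
    intro x _
    rw [Real.log_div (Real.exp_ne_zero _) hZ.ne', Real.log_exp]
    ring
  rw [setIntegral_congr_fun measurableSet_Icc h1,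
    integral_sub ((intXW lam M).const_mul _) ((intW lam M).const_mul _),
    integral_const_mul, integral_const_mul]
  show lam / Zi α lam M * Ni α lam M - Real.log (Zi α lam M) / Zi α lam M * Zi α lam M = _
  rw [div_mul_cancel₀ _ hZ.ne']
  ring

end ParetoTwist

open ParetoTwist

/-- Truncated exponential twisting of the Pareto density: for M large enough there
exists λ_M > 0 making the twisted truncated density have mean c; moreover
λ_M → 0 and the relative entropy D(f_{λ_M}‖f) → 0 as M → ∞. -/
theorem pareto_truncated_twist (α c : ℝ) (hα : 2 < α) (hc : 1 / (α - 2) < c) :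
    letI f : ℝ → ℝ := fun x => (α - 1) * (1 + x) ^ (-α)
    letI Z : ℝ → ℝ → ℝ := fun lam M => ∫ x in Set.Icc (0 : ℝ) M, Real.exp (lam * x) * f x
    ∃ (M₀ : ℝ) (lam : ℝ → ℝ),
      (∀ M ≥ M₀, 0 < lam M ∧
        (∫ x in Set.Icc (0 : ℝ) M, x * (Real.exp (lam M * x) * f x / Z (lam M) M)) = c) ∧
      Tendsto lam atTop (nhds 0) ∧
      Tendsto (fun M => ∫ x in Set.Icc (0 : ℝ) M,
          Real.log (Real.exp (lam M * x) / Z (lam M) M) *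
            (Real.exp (lam M * x) * f x / Z (lam M) M))
        atTop (nhds 0) := by
  beta_reduce
  have hα1 : (1:ℝ) < α := by linarith
  have hc2 : (0:ℝ) < α - 2 := by linarith
  have hc0 : (0:ℝ) < c := lt_trans (by positivity) hc
  -- the eventual good-M conditions
  have hgood : ∀ᶠ M in atTop, Gi α c M 0 < 0 ∧ 0 < Gi α c M 1 ∧ 1 ≤ M :=
    (Gi_zero_neg hα hc).and ((Gi_eps_pos hα hc one_pos).and (eventually_ge_atTop 1))
  -- key facts for each good M
  have key : ∀ M, (Gi α c M 0 < 0 ∧ 0 < Gi α c M 1 ∧ 1 ≤ M) →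
      0 < lamF α c M ∧ 0 < Zi α (lamF α c M) M ∧
        Ni α (lamF α c M) M = c * Zi α (lamF α c M) M := by
    intro M ⟨h0, h1, hM1⟩
    obtain ⟨hp, hle, hroot⟩ := lamF_spec one_pos h0 h1
    have hZ := Zi_pos hα1 hp.le (by linarith : (0:ℝ) < M)
    refine ⟨hp, hZ, ?_⟩
    have := Gi_eq (α := α) (c := c) M (lamF α c M)
    rw [hroot] at this
    linarith
  -- tendsto of lamF to 0
  have hlam0 : Tendsto (lamF α c) atTop (nhds 0) := by
    rw [NormedAddCommGroup.tendsto_nhds_zero]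
    intro ε hε
    filter_upwards [Gi_zero_neg hα hc, Gi_eps_pos hα hc (half_pos hε)] with M h0 h2
    obtain ⟨hp, hle, -⟩ := lamF_spec (half_pos hε) h0 h2
    rw [Real.norm_eq_abs, abs_of_pos hp]
    linarith
  -- generic conversion of the Z-integral
  have hZeq : ∀ (l M : ℝ), (∫ x in Set.Icc (0:ℝ) M, Real.exp (l * x) * ((α - 1) * (1 + x) ^ (-α)))
      = Zi α l M := fun l M =>
    setIntegral_congr_fun measurableSet_Icc fun x hx => by rw [fb_eq x hx.1]
  obtain ⟨M₀, hM₀⟩ := eventually_atTop.mp hgood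
  refine ⟨M₀, lamF α c, ?_, hlam0, ?_⟩
  · -- part 1: positivity and the mean constraint
    intro M hM
    obtain ⟨hlamp, hZpos, hcon⟩ := key M (hM₀ M hM)
    refine ⟨hlamp, ?_⟩
    set l := lamF α c M with hl
    simp only [hZeq]
    have hcongr : (∫ x in Set.Icc (0 : ℝ) M, x * (Real.exp (l * x) * ((α - 1) * (1 + x) ^ (-α)) / Zi α l M))
        = ∫ x in Set.Icc (0 : ℝ) M, (x * (Real.exp (l * x) * fb α x)) * (Zi α l M)⁻¹ :=
      setIntegral_congr_fun measurableSet_Icc fun x hx => by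
        rw [fb_eq x hx.1]; ring
    rw [hcongr, integral_mul_const]
    show Ni α l M * (Zi α l M)⁻¹ = c
    rw [hcon]
    field_simp
  · -- part 3: relative entropy tends to 0
    have hsq : Tendsto (fun M => Real.sqrt (lamF α c M)) atTop (nhds 0) := by
      have := (Real.continuous_sqrt.tendsto 0).comp hlam0
      simpa [Function.comp_def] using this
    have hZlow : Tendsto (fun M => Zi α 0 M) atTop (nhds 1) := by
      have hB := tendsto_one_add_rpow (p := α - 1) (by linarith)
      rw [show -(α - 1) = 1 - α from by ring] at hB
      have : Tendsto (fun M : ℝ => 1 - (1 + M) ^ (1 - α)) atTop (nhds (1 - 0)) :=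
        tendsto_const_nhds.sub hB
      rw [sub_zero] at this
      apply this.congr'
      filter_upwards [eventually_ge_atTop (0:ℝ)] with M hM
      rw [Zi_zero hα hM]
    have hupper : Tendsto (fun M => Real.exp (Real.sqrt (lamF α c M))
        / (1 - c * Real.sqrt (lamF α c M))) atTop (nhds 1) := by
      have hnum : Tendsto (fun M => Real.exp (Real.sqrt (lamF α c M))) atTop (nhds 1) := by
        have := (Real.continuous_exp.tendsto 0).comp hsq
        simpa [Function.comp_def] using this
      have hden : Tendsto (fun M => 1 - c * Real.sqrt (lamF α c M)) atTop (nhds 1) := by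
        have : Tendsto (fun M => 1 - c * Real.sqrt (lamF α c M)) atTop (nhds (1 - c * 0)) :=
          tendsto_const_nhds.sub (tendsto_const_nhds.mul hsq)
        simpa using this
      have := hnum.div hden one_ne_zero
      simpa [Pi.div_def] using this
    have hZtend : Tendsto (fun M => Zi α (lamF α c M) M) atTop (nhds 1) := by
      apply tendsto_of_tendsto_of_tendsto_of_le_of_le' hZlow hupper
      · filter_upwards [hgood] with M hg
        obtain ⟨hlamp, -, -⟩ := key M hg
        exact Zi_mono0 hα1 hlamp.le
      · filter_upwards [hgood, hsq.eventually_lt_const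
          (by positivity : (0:ℝ) < 1 / (2 * c))] with M hg hsmall
        obtain ⟨hlamp, hZpos, hcon⟩ := key M hg
        set l := lamF α c M with hl
        have hs : 0 < Real.sqrt l := Real.sqrt_pos.mpr hlamp
        have hcs : c * Real.sqrt l < 1 / 2 := by
          calc c * Real.sqrt l < c * (1 / (2 * c)) := mul_lt_mul_of_pos_left hsmall hc0
          _ = 1 / 2 := by field_simp
        have hden : (0:ℝ) < 1 - c * Real.sqrt l := by linarith
        have hup := Zi_upper hα hlamp (by linarith [hg.2.2] : (0:ℝ) ≤ M)
          (by positivity : (0:ℝ) < 1 / Real.sqrt l) hcon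
        rw [show l * (1 / Real.sqrt l) = Real.sqrt l from by
            rw [mul_one_div, Real.div_sqrt],
          show c / (1 / Real.sqrt l) = c * Real.sqrt l from by field_simp] at hup
        exact (le_div_iff₀ hden).mpr hup
    have hlog : Tendsto (fun M => Real.log (Zi α (lamF α c M) M)) atTop (nhds 0) := by
      have := ((Real.continuousAt_log one_ne_zero).tendsto).comp hZtend
      simpa [Function.comp_def] using this
    have hRHS : Tendsto (fun M => lamF α c M * c - Real.log (Zi α (lamF α c M) M))
        atTop (nhds 0) := by
      have := (hlam0.mul_const c).sub hlog
      simpa using this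
    apply hRHS.congr'
    filter_upwards [hgood] with M hg
    obtain ⟨hlamp, hZpos, hcon⟩ := key M hg
    set l := lamF α c M with hl
    simp only [hZeq]
    have hcongr : (∫ x in Set.Icc (0 : ℝ) M, Real.log (Real.exp (l * x) / Zi α l M)
        * (Real.exp (l * x) * ((α - 1) * (1 + x) ^ (-α)) / Zi α l M))
        = ∫ x in Set.Icc (0 : ℝ) M, Real.log (Real.exp (l * x) / Zi α l M)
          * (Real.exp (l * x) * fb α x / Zi α l M) :=
      setIntegral_congr_fun measurableSet_Icc fun x hx => by rw [fb_eq x hx.1]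
    rw [hcongr, entropy_eq hZpos, hcon, mul_div_assoc c, div_self hZpos.ne', mul_one]
end

section
/- (Tail transfer under a regularly varying marginal constraint) Let k=1 and suppose (X,Y) has joint density f̃(x,y) = g(x) φ(y; a + σ_{xy}(x − m)/σ_{xx}, v) where g is a probability density on ℝ that is regularly varying with index −α (α > 1), satisfies the domination condition g(b(t−s−a'))/g(t) ≤ h(s) for a nonnegative h with E[h(Z)] < ∞ for Gaussian Z, φ(·; m', v) is a Gaussian density with variance v > 0, and σ_{xy} > 0. Then the marginal density f̃_Y(s) = ∫ g(x) φ(s; a + σ_{xy}(x−m)/σ_{xx}, v) dx satisfies lim_{s→∞} f̃_Y(s)/g(s) = (σ_{xy}/σ_{xx})^{α−1}. -/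
open MeasureTheory ProbabilityTheory Real Filter
open scoped NNReal ENNReal

lemma measure_bad_tendsto_zero (c d : ℝ) (D : ℝ → ℝ → ℝ)
    (hD : ∀ x, Measurable (D x)) (hpt : ∀ u, Tendsto (fun x => D x u) atTop (nhds 0))
    {ε : ℝ} (hε : 0 < ε) :
    Tendsto (fun x => (volume {u | u ∈ Set.Icc c d ∧ ε ≤ |D x u|}).toReal)
      atTop (nhds 0) := by
  have hSmeas : ∀ x, MeasurableSet {u | u ∈ Set.Icc c d ∧ ε ≤ |D x u|} := by
    intro x
    exact (measurableSet_Icc.inter (measurableSet_le measurable_const (hD x).abs))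
  have key : ∀ x, (volume {u | u ∈ Set.Icc c d ∧ ε ≤ |D x u|}).toReal
      = ∫ u, ({u | u ∈ Set.Icc c d ∧ ε ≤ |D x u|}).indicator (fun _ => (1:ℝ)) u := by
    intro x
    exact (integral_indicator_one (hSmeas x)).symm
  simp only [key]
  have h0 : (0:ℝ) = ∫ (_ : ℝ), (0:ℝ) := by simp
  rw [h0]
  apply tendsto_integral_filter_of_dominated_convergence
    ((Set.Icc c d).indicator (fun _ => (1:ℝ)))
  · exact Eventually.of_forall fun x =>
      ((measurable_const.indicator (hSmeas x)).aestronglyMeasurable)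
  · refine Eventually.of_forall fun x => ae_of_all _ fun u => ?_
    by_cases h : u ∈ {u | u ∈ Set.Icc c d ∧ ε ≤ |D x u|}
    · rw [Set.indicator_of_mem h, Set.indicator_of_mem h.1]
      simp
    · rw [Set.indicator_of_notMem h]
      simp only [norm_zero]
      exact Set.indicator_nonneg (fun _ _ => zero_le_one) u
  · rw [integrable_indicator_iff measurableSet_Icc]
    exact integrableOn_const measure_Icc_lt_top.ne
  · refine ae_of_all _ fun u => ?_
    by_cases hu : u ∈ Set.Icc c d
    · have : ∀ᶠ x in atTop, ({u | u ∈ Set.Icc c d ∧ ε ≤ |D x u|}).indicator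
          (fun _ => (1:ℝ)) u = 0 := by
        have habs : Tendsto (fun x => |D x u|) atTop (nhds 0) := by
          simpa using (hpt u).abs
        filter_upwards [habs.eventually_lt_const hε] with x hx
        exact Set.indicator_of_notMem (fun h => absurd h.2 (not_le.2 hx)) _
      exact tendsto_const_nhds.congr' (this.mono fun x hx => hx.symm)
    · refine tendsto_const_nhds.congr fun x => ?_
      exact (Set.indicator_of_notMem (fun h => hu h.1) _).symm

lemma shift_K (K : ℝ → ℝ) (hK : Measurable K) (α : ℝ)
    (h : ∀ u : ℝ, Tendsto (fun x => K (x + u) - K x) atTop (nhds (-α * u)))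
    (w : ℝ → ℝ) (hw : Tendsto w atTop (nhds 0)) :
    Tendsto (fun x => K (x + w x) - K x) atTop (nhds 0) := by
  rw [Metric.tendsto_nhds]
  intro ε hε
  have hε4 : 0 < ε / 4 := by linarith
  set D : ℝ → ℝ → ℝ := fun x u => K (x + u) - K x + α * u with hDdef
  have hDmeas : ∀ x, Measurable (D x) := by
    intro x
    exact ((hK.comp (measurable_const.add measurable_id)).sub measurable_const).add
      (measurable_const.mul measurable_id)
  have hDpt : ∀ u, Tendsto (fun x => D x u) atTop (nhds 0) := by
    intro u
    have := (h u).add_const (α * u)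
    simpa using this
  have hxw : Tendsto (fun x => x + w x) atTop atTop := by
    refine tendsto_atTop_mono' atTop ?_ (tendsto_atTop_add_const_right _ (-1) tendsto_id)
    filter_upwards [hw.eventually (eventually_abs_sub_lt 0 one_pos)] with x hx
    have : |w x| < 1 := by simpa using hx
    have := abs_lt.1 this
    simp only [id_eq]
    linarith
  have hDpt' : ∀ u, Tendsto (fun x => D (x + w x) u) atTop (nhds 0) :=
    fun u => (hDpt u).comp hxw
  have hV := measure_bad_tendsto_zero (-1) 2 D hDmeas hDpt hε4
  have hW := measure_bad_tendsto_zero 0 1 (fun x => D (x + w x))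
    (fun x => hDmeas _) hDpt' hε4
  -- eventual smallness
  have hVev := hV.eventually_lt_const (show (0:ℝ) < 1/4 by norm_num)
  have hWev := hW.eventually_lt_const (show (0:ℝ) < 1/4 by norm_num)
  have hwev : ∀ᶠ x in atTop, |w x| ≤ 1 ∧ |α| * |w x| < ε / 4 := by
    have h1 : Tendsto (fun x => |α| * |w x|) atTop (nhds 0) := by
      have := hw.abs.const_mul |α|
      simpa using this
    filter_upwards [hw.eventually (eventually_abs_sub_lt 0 one_pos),
      h1.eventually_lt_const hε4] with x h1 h2
    refine ⟨le_of_lt (by simpa using h1), h2⟩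
  filter_upwards [hVev, hWev, hwev] with x hVx hWx hwx
  set Vx := {u | u ∈ Set.Icc (-1:ℝ) 2 ∧ ε / 4 ≤ |D x u|} with hVxdef
  set Wx := {u | u ∈ Set.Icc (0:ℝ) 1 ∧ ε / 4 ≤ |D (x + w x) u|} with hWxdef
  have hVxmeas : MeasurableSet Vx :=
    measurableSet_Icc.inter (measurableSet_le measurable_const (hDmeas x).abs)
  have hVfin : volume Vx ≠ ⊤ :=
    ((measure_mono (fun u hu => hu.1)).trans_lt measure_Icc_lt_top).ne
  have hWfin : volume Wx ≠ ⊤ :=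
    ((measure_mono (fun u hu => hu.1)).trans_lt measure_Icc_lt_top).ne
  -- find a good u
  have hbad : volume (Wx ∪ ((· + w x) ⁻¹' Vx)) < volume (Set.Icc (0:ℝ) 1) := by
    have h1 : volume ((· + w x) ⁻¹' Vx) = volume Vx := by
      exact measure_preimage_add_right volume (w x) Vx
    calc volume (Wx ∪ ((· + w x) ⁻¹' Vx)) ≤ volume Wx + volume ((· + w x) ⁻¹' Vx) :=
          measure_union_le _ _
      _ < ENNReal.ofReal (1/4) + ENNReal.ofReal (1/4) := by
          apply ENNReal.add_lt_add
          · exact (ENNReal.lt_ofReal_iff_toReal_lt hWfin).2 hWx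
          · rw [h1]; exact (ENNReal.lt_ofReal_iff_toReal_lt hVfin).2 hVx
      _ < volume (Set.Icc (0:ℝ) 1) := by
          rw [Real.volume_Icc, ← ENNReal.ofReal_add (by norm_num) (by norm_num)]
          apply ENNReal.ofReal_lt_ofReal_iff_of_nonneg (by norm_num) |>.2
          norm_num
  obtain ⟨u, hu, hu2⟩ : ∃ u, u ∈ Set.Icc (0:ℝ) 1 ∧ u ∉ Wx ∪ ((· + w x) ⁻¹' Vx) := by
    by_contra hcon
    push_neg at hcon
    exact absurd (measure_mono (fun u hu => hcon u hu)) (not_le.2 hbad)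
  have hu2' := hu2
  simp only [Set.mem_union, not_or] at hu2'
  obtain ⟨huW, huV⟩ := hu2'
  have hW4 : |D (x + w x) u| < ε / 4 := by
    by_contra hcon
    exact huW ⟨hu, not_lt.1 hcon⟩
  have huwIcc : u + w x ∈ Set.Icc (-1:ℝ) 2 := by
    obtain ⟨h0, h1⟩ := hu
    have := abs_le.1 hwx.1
    constructor <;> [linarith [this.1]; linarith [this.2]]
  have hV4 : |D x (u + w x)| < ε / 4 := by
    by_contra hcon
    exact huV ⟨huwIcc, not_lt.1 hcon⟩
  -- conclude
  have hid : K (x + w x) - K x = D x (u + w x) - D (x + w x) u - α * w x := by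
    have harg : x + (u + w x) = x + w x + u := by ring
    simp only [hDdef, harg]
    ring
  rw [Real.dist_eq, sub_zero, hid]
  calc |D x (u + w x) - D (x + w x) u - α * w x|
      ≤ |D x (u + w x)| + |D (x + w x) u| + |α * w x| := by
        exact abs_le.2 ⟨by linarith [neg_abs_le (D x (u + w x)), neg_abs_le (D (x + w x) u), neg_abs_le (α * w x), le_abs_self (D x (u + w x)), le_abs_self (D (x + w x) u), le_abs_self (α * w x)], by linarith [neg_abs_le (D x (u + w x)), neg_abs_le (D (x + w x) u), neg_abs_le (α * w x), le_abs_self (D x (u + w x)), le_abs_self (D (x + w x) u), le_abs_self (α * w x)]⟩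
    _ < ε / 4 + ε / 4 + ε / 4 := by
        rw [abs_mul]
        exact add_lt_add (add_lt_add hV4 hW4) hwx.2
    _ < ε := by linarith

lemma ratio_shift (g : ℝ → ℝ) (hg_meas : Measurable g) (hg_pos : ∀ x, 0 < g x)
    (α : ℝ)
    (hg_rv : ∀ η : ℝ, 0 < η →
      Tendsto (fun t => g (η * t) / g t) atTop (nhds (η ^ (-α))))
    (c : ℝ) : Tendsto (fun t => g (t + c) / g t) atTop (nhds 1) := by
  set K : ℝ → ℝ := fun x => Real.log (g (Real.exp x)) with hKdef
  have hK : Measurable K := Real.measurable_log.comp (hg_meas.comp Real.measurable_exp)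
  have hrv' : ∀ u : ℝ, Tendsto (fun x => K (x + u) - K x) atTop (nhds (-α * u)) := by
    intro u
    have h1 : Tendsto (fun x => g (Real.exp u * Real.exp x) / g (Real.exp x)) atTop
        (nhds ((Real.exp u) ^ (-α))) := (hg_rv _ (Real.exp_pos u)).comp Real.tendsto_exp_atTop
    have h2 := h1.log (ne_of_gt (Real.rpow_pos_of_pos (Real.exp_pos u) _))
    rw [Real.log_rpow (Real.exp_pos u), Real.log_exp] at h2
    refine h2.congr fun x => ?_
    rw [Real.log_div (ne_of_gt (hg_pos _)) (ne_of_gt (hg_pos _)), ← Real.exp_add]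
    simp only [hKdef]
    rw [add_comm u x]
  set w : ℝ → ℝ := fun x => Real.log (max (Real.exp x + c) 1) - x with hwdef
  have hwev : ∀ᶠ x in atTop, w x = Real.log (1 + c * Real.exp (-x)) := by
    filter_upwards [Real.tendsto_exp_atTop.eventually_ge_atTop (1 - c)] with x hx
    have hmax : max (Real.exp x + c) 1 = Real.exp x + c := max_eq_left (by linarith)
    have hpos : (0:ℝ) < Real.exp x + c := lt_of_lt_of_le one_pos (by linarith)
    simp only [hwdef, hmax]
    rw [show (1 + c * Real.exp (-x)) = (Real.exp x + c) * Real.exp (-x) by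
      rw [add_mul, ← Real.exp_add]; simp [mul_comm],
      Real.log_mul (ne_of_gt hpos) (ne_of_gt (Real.exp_pos _)), Real.log_exp]
    ring
  have hw : Tendsto w atTop (nhds 0) := by
    have h1 : Tendsto (fun x => 1 + c * Real.exp (-x)) atTop (nhds 1) := by
      have := Real.tendsto_exp_neg_atTop_nhds_zero.const_mul c
      simpa using (tendsto_const_nhds (x := (1:ℝ))).add this
    have h2 := h1.log one_ne_zero
    rw [Real.log_one] at h2
    exact h2.congr' (hwev.mono fun x hx => hx.symm)
  have hshift := shift_K K hK α hrv' w hw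
  have hexp : Tendsto (fun x => Real.exp (K (x + w x) - K x)) atTop (nhds 1) := by
    have := (Real.continuous_exp.tendsto 0).comp hshift
    simpa [Function.comp_def] using this
  have hval : ∀ x, Real.exp (K (x + w x) - K x)
      = g (max (Real.exp x + c) 1) / g (Real.exp x) := by
    intro x
    have harg : x + w x = Real.log (max (Real.exp x + c) 1) := by simp [hwdef]
    have hmaxpos : (0:ℝ) < max (Real.exp x + c) 1 := lt_of_lt_of_le one_pos (le_max_right _ _)
    rw [Real.exp_sub]
    simp only [hKdef, harg, Real.exp_log hmaxpos]
    rw [Real.exp_log (hg_pos _), Real.exp_log (hg_pos _)]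
  have hmain : Tendsto (fun x => g (max (Real.exp x + c) 1) / g (Real.exp x)) atTop (nhds 1) :=
    hexp.congr fun x => hval x
  have hcomp := hmain.comp Real.tendsto_log_atTop
  refine hcomp.congr' ?_
  filter_upwards [eventually_ge_atTop (max 1 (1 - c)), eventually_gt_atTop (0:ℝ)]
    with t ht htpos
  have h1 : Real.exp (Real.log t) = t := Real.exp_log htpos
  have h2 : max (t + c) 1 = t + c :=
    max_eq_left (by have := le_trans (le_max_right 1 (1-c)) ht; linarith)
  simp only [Function.comp, h1, h2]

lemma ratio_scale (g : ℝ → ℝ) (hg_meas : Measurable g) (hg_pos : ∀ x, 0 < g x)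
    (α : ℝ)
    (hg_rv : ∀ η : ℝ, 0 < η →
      Tendsto (fun t => g (η * t) / g t) atTop (nhds (η ^ (-α))))
    (b c : ℝ) (hb : 0 < b) :
    Tendsto (fun t => g (b * (t - c)) / g t) atTop (nhds (b ^ (-α))) := by
  have h1 : Tendsto (fun t => g (b * t + -(b * c)) / g (b * t)) atTop (nhds 1) :=
    (ratio_shift g hg_meas hg_pos α hg_rv (-(b * c))).comp
      (Tendsto.const_mul_atTop hb tendsto_id)
  have h3 := h1.mul (hg_rv b hb)
  rw [one_mul] at h3
  refine h3.congr fun t => ?_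
  rw [div_mul_div_cancel₀ (ne_of_gt (hg_pos (b * t)))]
  congr 1
  ring_nf

/-- Tail transfer under a regularly varying marginal constraint (k = 1): if g is a
regularly varying probability density of index −α (α > 1) satisfying a domination
condition, and f̃(x,y) = g(x) φ(y; a + σ_xy (x−m)/σ_xx, v), then the Y-marginal
f̃_Y(s) = ∫ g(x) φ(s; a + σ_xy(x−m)/σ_xx, v) dx satisfies
f̃_Y(s)/g(s) → (σ_xy/σ_xx)^{α−1} as s → ∞. -/
theorem tail_transfer_regular_variation
    (g : ℝ → ℝ) (hg_meas : Measurable g) (hg_pos : ∀ x, 0 < g x)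
    (hg_dens : (∫ x, g x) = 1)
    (α : ℝ) (hα : 1 < α)
    (hg_rv : ∀ η : ℝ, 0 < η →
      Tendsto (fun t => g (η * t) / g t) atTop (nhds (η ^ (-α))))
    (hdom : ∀ a' b : ℝ, 0 < b → ∃ h : ℝ → ℝ, (∀ s, 0 ≤ h s) ∧
      (∀ s t : ℝ, g (b * (t - s - a')) / g t ≤ h s) ∧
      (∀ (m' : ℝ) (v' : NNReal), v' ≠ 0 → Integrable h (gaussianReal m' v')))
    (σxx σxy v a m : ℝ) (hσxx : 0 < σxx) (hσxy : 0 < σxy) (hv : 0 < v) :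
    letI φ : ℝ → ℝ → ℝ := fun y mu =>
      (Real.sqrt (2 * Real.pi * v))⁻¹ * Real.exp (-(y - mu) ^ 2 / (2 * v))
    Tendsto (fun s => (∫ x, g x * φ s (a + σxy * (x - m) / σxx)) / g s)
      atTop (nhds ((σxy / σxx) ^ (α - 1))) := by
  set φ : ℝ → ℝ → ℝ := fun y mu =>
      (Real.sqrt (2 * Real.pi * v))⁻¹ * Real.exp (-(y - mu) ^ 2 / (2 * v)) with hφdef
  set v' : ℝ≥0 := ⟨v, hv.le⟩ with hv'def
  have hcoe : ((v' : ℝ≥0) : ℝ) = v := rfl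
  have hv'ne : v' ≠ 0 := by
    exact fun hc => hv.ne' (by rw [← hcoe, hc, NNReal.coe_zero])
  set b : ℝ := σxx / σxy with hbdef
  have hb : 0 < b := div_pos hσxx hσxy
  set a' : ℝ := a - m / b with ha'def
  obtain ⟨h, hh0, hh1, hh2⟩ := hdom a' b hb
  set μ : Measure ℝ := gaussianReal 0 v' with hμdef
  have hgauss : ∀ G : ℝ → ℝ, ∫ z, G z ∂μ = ∫ z, gaussianPDFReal 0 v' z * G z := by
    intro G
    rw [hμdef, gaussianReal_of_var_ne_zero _ hv'ne]
    have hpdf : gaussianPDF 0 v'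
        = fun z => ((Real.toNNReal (gaussianPDFReal 0 v' z) : ℝ≥0) : ℝ≥0∞) := rfl
    rw [hpdf, integral_withDensity_eq_integral_smul
      ((measurable_gaussianPDFReal 0 v').real_toNNReal) G]
    congr 1
    funext z
    rw [NNReal.smul_def, smul_eq_mul, Real.coe_toNNReal _ (gaussianPDFReal_nonneg _ _ _)]
  -- key substitution identity
  have key : ∀ s : ℝ, (∫ x, g x * φ s (a + σxy * (x - m) / σxx))
      = b * ∫ z, g (b * (s - z - a')) ∂μ := by
    intro s
    rw [hgauss]
    set F : ℝ → ℝ := fun z => gaussianPDFReal 0 v' z * g (b * (s - z - a')) with hFdef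
    have step1 : ∀ x : ℝ, g x * φ s (a + σxy * (x - m) / σxx)
        = F (s - a' + (-(1 / b)) * x) := by
      intro x
      have hbne : b ≠ 0 := ne_of_gt hb
      have e1 : b * (s - (s - a' + (-(1 / b)) * x) - a') = x := by
        field_simp
        ring
      have e2 : gaussianPDFReal 0 v' (s - a' + -(1 / b) * x)
          = φ s (a + σxy * (x - m) / σxx) := by
        rw [gaussianPDFReal]
        have harg : s - a' + -(1 / b) * x - 0 = s - (a + σxy * (x - m) / σxx) := by
          simp only [ha'def, hbdef]
          field_simp
          ring
        rw [hcoe, harg]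
      simp only [hFdef, e1, e2]
      ring
    calc (∫ x, g x * φ s (a + σxy * (x - m) / σxx))
        = ∫ x, F (s - a' + (-(1 / b)) * x) := by simp_rw [step1]
      _ = |(-(1 / b))⁻¹| • ∫ y, F (s - a' + y) := by
          exact Measure.integral_comp_mul_left (fun y => F (s - a' + y)) (-(1 / b))
      _ = b * ∫ y, F (s - a' + y) := by
          rw [smul_eq_mul, show (-(1 / b))⁻¹ = -b by field_simp, abs_neg,
            abs_of_pos hb]
      _ = b * ∫ z, F z := by
          rw [integral_add_left_eq_self (fun z => F z) (s - a')]
  have hfun : ∀ s : ℝ, (∫ x, g x * φ s (a + σxy * (x - m) / σxx)) / g s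
      = b * ∫ z, g (b * (s - z - a')) / g s ∂μ := by
    intro s
    rw [key s, integral_div]
    ring
  have hpt : ∀ z : ℝ, Tendsto (fun s => g (b * (s - z - a')) / g s) atTop
      (nhds (b ^ (-α))) := by
    intro z
    have hrs := ratio_scale g hg_meas hg_pos α hg_rv b (z + a') hb
    refine hrs.congr fun t => ?_
    rw [show t - (z + a') = t - z - a' by ring]
  haveI : IsProbabilityMeasure μ := by rw [hμdef]; infer_instance
  have hDCT : Tendsto (fun s => ∫ z, g (b * (s - z - a')) / g s ∂μ) atTop
      (nhds (b ^ (-α))) := by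
    have hconst : (b:ℝ) ^ (-α) = ∫ (_ : ℝ), (b:ℝ) ^ (-α) ∂μ := by
      simp
    rw [hconst]
    apply tendsto_integral_filter_of_dominated_convergence h
    · refine Eventually.of_forall fun s => ?_
      exact ((hg_meas.comp (by fun_prop)).div_const _).aestronglyMeasurable
    · refine Eventually.of_forall fun s => ae_of_all _ fun z => ?_
      rw [Real.norm_eq_abs, abs_of_nonneg (div_nonneg (hg_pos _).le (hg_pos _).le)]
      exact hh1 z s
    · exact hh2 0 v' hv'ne
    · exact ae_of_all _ hpt
  have hfinal := hDCT.const_mul b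
  have hlim : b * b ^ (-α) = (σxy / σxx) ^ (α - 1) := by
    have hinv : σxy / σxx = b⁻¹ := by rw [hbdef, inv_div]
    have h1 : b * b ^ (-α) = b ^ (1 - α) := by
      rw [show (1 - α) = 1 + (-α) by ring, Real.rpow_add hb, Real.rpow_one]
    have h2 : (σxy / σxx) ^ (α - 1) = b ^ (1 - α) := by
      rw [hinv, Real.inv_rpow hb.le, ← Real.rpow_neg hb.le, neg_sub]
    rw [h1, h2]
  rw [← hlim]
  exact hfinal.congr fun s => (hfun s).symm
end
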